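/- Let $d \ge 1$, $M \ge 8$, $t_1 \ge 2$, and let $\{t_j\}$ be a sequence of positive reals with $t_{j+1}/t_j \ge 1 + 1/M$ for all $j$. Then there exist real numbers $\alpha_1, \dots, \alpha_d$ such that $\max_{1 \le k \le d} \|\alpha_k t_j\| \ge \frac{1}{2^{11}(M \log M)^{1/d}}$ for all $j \in \mathbb{N}$. -/

import Mathlib

namespace PS
attribute [local instance] Classical.propDecidable
def bad (t ε : ℝ) (n i : ℕ) : Prop :=
  ∃ x : ℝ, (i : ℝ)/2^n ≤ x ∧ x ≤ ((i:ℝ)+1)/2^n ∧ ∃ b : ℤ, |x * t - b| < ε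
noncomputable def mj (t : ℕ → ℝ) (j : ℕ) : ℕ := ⌊Real.logb 2 (t j)⌋₊

section MJ
variable {t : ℕ → ℝ} {j : ℕ}

lemma mj_lb (h2 : 2 ≤ t j) : (2:ℝ)^(mj t j) ≤ t j := by
  have ht0 : (0:ℝ) < t j := by linarith
  have hy : 0 ≤ Real.logb 2 (t j) := by
    apply Real.logb_nonneg (by norm_num) (by linarith)
  calc (2:ℝ)^(mj t j) = (2:ℝ)^((mj t j : ℝ)) := by
        rw [Real.rpow_natCast]
    _ ≤ (2:ℝ)^(Real.logb 2 (t j)) := by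
        apply Real.rpow_le_rpow_of_exponent_le (by norm_num)
        exact Nat.floor_le hy
    _ = t j := Real.rpow_logb (by norm_num) (by norm_num) ht0

lemma mj_ub (h2 : 2 ≤ t j) : t j < (2:ℝ)^(mj t j + 1) := by
  have ht0 : (0:ℝ) < t j := by linarith
  calc t j = (2:ℝ)^(Real.logb 2 (t j)) := (Real.rpow_logb (by norm_num) (by norm_num) ht0).symm
    _ < (2:ℝ)^((mj t j + 1 : ℕ) : ℝ) := by
        apply Real.rpow_lt_rpow_of_exponent_lt (by norm_num)
        push_cast
        exact Nat.lt_floor_add_one _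
    _ = (2:ℝ)^(mj t j + 1) := Real.rpow_natCast _ _

lemma mj_one (h2 : 2 ≤ t j) : 1 ≤ mj t j := by
  apply Nat.le_floor
  rw [show ((1:ℕ):ℝ) = 1 by norm_num]
  have : Real.logb 2 2 ≤ Real.logb 2 (t j) := by
    exact (Real.logb_le_logb (by norm_num) (by norm_num) (by linarith)).mpr (by linarith)
  simpa using this

end MJ

/-- One-dimensional kill count. -/
lemma kill1d {t ε : ℝ} {m g n : ℕ} (hn : n + 1 = m + g)
    (h1 : (2:ℝ)^m ≤ t) (h2 : t < 2^(m+1)) (hε : 0 < ε) (hε2 : ε * 2^(g+2) ≤ 2)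
    (a : ℕ) :
    (Finset.filter (fun i => bad t ε (n+1) i)
      (Finset.Ico (a * 2^g) ((a+1) * 2^g))).card ≤ 9 := by
  classical
  have ht0 : (0:ℝ) < t := lt_of_lt_of_le (by positivity) h1
  set L : ℝ := (a:ℝ) * t / 2^m - ε with hL
  set B : Finset ℤ := Finset.Icc (⌊L⌋ + 1) (⌊L⌋ + 3) with hB
  set A : ℤ → ℝ := fun b => ((b:ℝ) - ε) * 2^(n+1) / t - 1 with hA
  set I : ℤ → Finset ℕ := fun b =>
    Finset.image Int.toNat (Finset.Icc (⌊A b⌋ + 1) (⌊A b⌋ + 3)) with hI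
  have hεhalf : ε ≤ 1/2 := by
    have : (2:ℝ)^(g+2) ≥ 4 := by
      have : (4:ℝ) = 2^2 := by norm_num
      rw [this]
      exact pow_le_pow_right₀ (by norm_num) (by omega)
    nlinarith
  have hsub : Finset.filter (fun i => bad t ε (n+1) i)
      (Finset.Ico (a * 2^g) ((a+1) * 2^g)) ⊆ B.biUnion I := by
    intro i hi
    rw [Finset.mem_filter] at hi
    obtain ⟨hiIco, x, hx1, hx2, b, hxb⟩ := hi
    rw [Finset.mem_Ico] at hiIco
    -- x ∈ [a/2^m, (a+1)/2^m]
    have h2n : (0:ℝ) < 2^(n+1) := by positivity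
    have hcoef : ((2:ℝ)^g) / 2^(n+1) = 1/2^m := by
      rw [hn]
      rw [div_eq_div_iff (by positivity) (by positivity)]
      rw [one_mul, ← pow_add]
      ring
    have hxl : (a:ℝ)/2^m ≤ x := by
      refine le_trans ?_ hx1
      rw [div_le_div_iff₀ (by positivity) h2n]
      calc (a:ℝ) * 2^(n+1) = (a:ℝ)*2^(m+g) := by rw [hn]
        _ = ((a*2^g : ℕ):ℝ) * 2^m := by push_cast; rw [pow_add]; ring
        _ ≤ (i:ℝ) * 2^m := by
            apply mul_le_mul_of_nonneg_right _ (by positivity)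
            exact_mod_cast hiIco.1
    have hxu : x ≤ ((a:ℝ)+1)/2^m := by
      refine le_trans hx2 ?_
      rw [div_le_div_iff₀ h2n (by positivity)]
      calc ((i:ℝ)+1) * 2^m ≤ (((a+1) * 2^g : ℕ):ℝ) * 2^m := by
            apply mul_le_mul_of_nonneg_right _ (by positivity)
            have : i + 1 ≤ (a+1) * 2^g := hiIco.2
            exact_mod_cast this
        _ = ((a:ℝ)+1) * 2^(n+1) := by push_cast; rw [hn, pow_add]; ring
    -- b ∈ B
    obtain ⟨ha1, ha2⟩ := abs_lt.mp hxb
    have hbmem : b ∈ B := by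
      rw [hB, Finset.mem_Icc]
      constructor
      · -- ⌊L⌋ + 1 ≤ b  i.e.  ⌊L⌋ < b  i.e. L < b
        rw [Int.add_one_le_iff, Int.floor_lt]
        have hxt : (a:ℝ) * t / 2^m ≤ x * t := by
          calc (a:ℝ) * t / 2^m = (a:ℝ)/2^m * t := by ring
            _ ≤ x * t := mul_le_mul_of_nonneg_right hxl (le_of_lt ht0)
        rw [hL]
        linarith
      · -- b ≤ ⌊L⌋ + 3 : b < L + 3 ⇒ (b:ℝ) ≤ L + 3... use b ≤ ⌊L+3⌋
        have hbr : (b:ℝ) < L + 3 := by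
          have hxt : x * t ≤ ((a:ℝ)+1)/2^m * t := mul_le_mul_of_nonneg_right hxu (le_of_lt ht0)
          have ht2m : t/2^m < 2 := by
            rw [div_lt_iff₀ (by positivity)]
            calc t < 2^(m+1) := h2
              _ = 2 * 2^m := by rw [pow_succ]; ring
          have : x * t < (a:ℝ)*t/2^m + 2 := by
            have : ((a:ℝ)+1)/2^m * t = (a:ℝ)*t/2^m + t/2^m := by ring
            linarith
          have : (b:ℝ) < x*t + ε := by linarith
          rw [hL]; linarith [hεhalf]
        have : (b - 3 : ℤ) ≤ ⌊L⌋ := by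
          apply Int.le_floor.mpr
          push_cast
          linarith
        omega
    -- i ∈ I b
    rw [Finset.mem_biUnion]
    refine ⟨b, hbmem, ?_⟩
    rw [hI]
    simp only [Finset.mem_image]
    refine ⟨(i:ℤ), ?_, rfl⟩
    rw [Finset.mem_Icc]
    have h2nt : (0:ℝ) < 2^(n+1)/t := by positivity
    constructor
    · -- ⌊A b⌋ < i  ⟸ A b < i
      rw [Int.add_one_le_iff, Int.floor_lt]
      -- b < (i+1)/2^(n+1) * t + ε
      have hb1 : (b:ℝ) < ((i:ℝ)+1)/2^(n+1) * t + ε := by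
        have : x*t ≤ ((i:ℝ)+1)/2^(n+1) * t := mul_le_mul_of_nonneg_right hx2 (le_of_lt ht0)
        linarith
      rw [hA]
      -- ((b-ε) * 2^(n+1))/t - 1 < i
      have : ((b:ℝ) - ε) < ((i:ℝ)+1)/2^(n+1) * t := by linarith
      have : ((b:ℝ) - ε) * 2^(n+1) / t < (i:ℝ)+1 := by
        rw [div_lt_iff₀ ht0]
        calc ((b:ℝ) - ε) * 2^(n+1) < (((i:ℝ)+1)/2^(n+1) * t) * 2^(n+1) := by
              apply mul_lt_mul_of_pos_right this h2n
          _ = ((i:ℝ)+1) * t := by field_simp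
      push_cast
      linarith
    · -- i ≤ ⌊A b⌋ + 3 ⟸ i < A b + 3 is enough... we show (i:ℝ) < A b + 3
      have hb2 : (i:ℝ)/2^(n+1) * t - ε < b := by
        have : (i:ℝ)/2^(n+1) * t ≤ x * t := mul_le_mul_of_nonneg_right hx1 (le_of_lt ht0)
        linarith
      -- i * t < (b+ε) 2^(n+1)  ⇒ i < (b+ε)2^(n+1)/t = A b + 1 + 2ε2^(n+1)/t
      have hfrac : (2:ℝ)^(n+1)/t ≤ 2^(g+1) := by
        rw [div_le_iff₀ ht0]
        calc (2:ℝ)^(n+1) = 2^(m+g) := by rw [hn]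
          _ = 2^g * 2^m := by rw [pow_add]; ring
          _ ≤ 2^g * t := by nlinarith [h1, pow_pos (show (0:ℝ)<2 by norm_num) g]
          _ ≤ 2^(g+1) * t := by
              have : (2:ℝ)^g ≤ 2^(g+1) := by
                apply pow_le_pow_right₀ (by norm_num) (by omega)
              nlinarith
      have h2e : 2*ε*(2^(n+1)/t) ≤ 2 := by
        have : 2*ε*((2:ℝ)^(n+1)/t) ≤ 2*ε*2^(g+1) := by
          apply mul_le_mul_of_nonneg_left hfrac (by positivity)
        have he : 2*ε*(2:ℝ)^(g+1) = ε * 2^(g+2) := by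
          rw [pow_succ, pow_succ]; ring
        linarith [hε2, he ▸ this]
      have : (i:ℝ) < ((b:ℝ)+ε) * 2^(n+1)/t := by
        rw [lt_div_iff₀ ht0]
        have : (i:ℝ)/2^(n+1)*t < (b:ℝ)+ε := by linarith
        calc (i:ℝ) * t = ((i:ℝ)/2^(n+1)*t) * 2^(n+1) := by field_simp
          _ < ((b:ℝ)+ε) * 2^(n+1) := mul_lt_mul_of_pos_right this h2n
      have hAb : (i:ℝ) < A b + 3 := by
        rw [hA]
        have hexp : ((b:ℝ)+ε) * 2^(n+1)/t = ((b:ℝ)-ε) * 2^(n+1)/t + 2*ε*(2^(n+1)/t) := by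
          ring
        linarith
      have : (i:ℤ) - 3 ≤ ⌊A b⌋ := by
        apply Int.le_floor.mpr
        push_cast
        linarith
      omega
  calc (Finset.filter (fun i => bad t ε (n+1) i)
      (Finset.Ico (a * 2^g) ((a+1) * 2^g))).card
      ≤ (B.biUnion I).card := Finset.card_le_card hsub
    _ ≤ ∑ b ∈ B, (I b).card := Finset.card_biUnion_le
    _ ≤ ∑ _b ∈ B, 3 := by
        apply Finset.sum_le_sum
        intro b _
        rw [hI]
        calc (Finset.image Int.toNat (Finset.Icc (⌊A b⌋ + 1) (⌊A b⌋ + 3))).card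
            ≤ (Finset.Icc (⌊A b⌋ + 1) (⌊A b⌋ + 3)).card := Finset.card_image_le
          _ = 3 := by rw [Int.card_Icc]; norm_num; omega
    _ = B.card * 3 := by rw [Finset.sum_const, smul_eq_mul]
    _ ≤ 9 := by
        rw [hB, Int.card_Icc]
        norm_num
        omega


section Seq

variable {M : ℝ} {t : ℕ → ℝ}

lemma t_growth (hM : 8 ≤ M) (hpos : ∀ j, 1 ≤ j → 0 < t j)
    (hlac : ∀ j, 1 ≤ j → 1 + 1 / M ≤ t (j + 1) / t j) :
    ∀ i k, 1 ≤ i → t i * (1 + 1/M)^k ≤ t (i + k) := by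
  intro i k hi
  induction k with
  | zero => simp
  | succ k ih =>
    have hik : 1 ≤ i + k := le_trans hi (Nat.le_add_right _ _)
    have h1 := hlac (i+k) hik
    have h2 : t (i+k) * (1 + 1/M) ≤ t (i+k+1) := by
      have hp := hpos (i+k) hik
      rw [le_div_iff₀ hp] at h1
      linarith [h1]
    have hpos1 : (0:ℝ) ≤ 1 + 1/M := by positivity
    calc t i * (1+1/M)^(k+1) = (t i * (1+1/M)^k) * (1+1/M) := by ring
    _ ≤ t (i+k) * (1+1/M) := by
        apply mul_le_mul_of_nonneg_right ih hpos1
    _ ≤ t (i+k+1) := h2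

lemma t_two (hM : 8 ≤ M) (hpos : ∀ j, 1 ≤ j → 0 < t j) (ht1 : 2 ≤ t 1)
    (hlac : ∀ j, 1 ≤ j → 1 + 1 / M ≤ t (j + 1) / t j) :
    ∀ j, 1 ≤ j → 2 ≤ t j := by
  intro j hj
  obtain ⟨k, rfl⟩ := Nat.exists_eq_add_of_le hj
  have h := t_growth hM hpos hlac 1 k le_rfl
  have hpow : (1:ℝ) ≤ (1 + 1/M)^k := by
    apply one_le_pow₀
    have : 0 < M := by linarith
    have : 0 ≤ 1/M := by positivity
    linarith
  nlinarith

end Seq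

noncomputable def E (d g : ℕ) (t : ℕ → ℝ) (ε : ℝ) : ℕ → Finset (Fin d → ℕ)
  | 0 => {fun _ => 0}
  | n+1 => Finset.filter
      (fun c => ¬ ∃ j, 1 ≤ j ∧ mj t j + g = n+1 ∧ ∀ k, bad (t j) ε (n+1) (c k))
      ((E d g t ε n).biUnion
        (fun c => Fintype.piFinset (fun k => ({2 * c k, 2 * c k + 1} : Finset ℕ))))

section Estruct
variable {d g : ℕ} {t : ℕ → ℝ} {ε : ℝ}

/-- children finset of a cell -/
def ch (d : ℕ) (c : Fin d → ℕ) : Finset (Fin d → ℕ) :=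
  Fintype.piFinset (fun k => ({2 * c k, 2 * c k + 1} : Finset ℕ))

lemma E_succ (n : ℕ) : E d g t ε (n+1) = Finset.filter
      (fun c => ¬ ∃ j, 1 ≤ j ∧ mj t j + g = n+1 ∧ ∀ k, bad (t j) ε (n+1) (c k))
      ((E d g t ε n).biUnion (ch d)) := rfl

lemma parent_of_child {p c : Fin d → ℕ} (hp : c ∈ ch d p) :
    (fun k => c k / 2) = p := by
  funext k
  have := Fintype.mem_piFinset.mp hp k
  simp only [Finset.mem_insert, Finset.mem_singleton] at this
  rcases this with h | h <;> omega

lemma parent_mem_of_mem_biUnion {n : ℕ} {c : Fin d → ℕ}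
    (hc : c ∈ (E d g t ε n).biUnion (ch d)) :
    (fun k => c k / 2) ∈ E d g t ε n := by
  obtain ⟨p, hp, hcp⟩ := Finset.mem_biUnion.mp hc
  rw [parent_of_child hcp]
  exact hp

lemma parent_mem {n : ℕ} {c : Fin d → ℕ} (hc : c ∈ E d g t ε (n+1)) :
    (fun k => c k / 2) ∈ E d g t ε n := by
  rw [E_succ] at hc
  exact parent_mem_of_mem_biUnion (Finset.mem_filter.mp hc).1

lemma ancestor_mem {n : ℕ} (s : ℕ) {c : Fin d → ℕ} (hc : c ∈ E d g t ε (n+s)) :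
    (fun k => c k / 2^s) ∈ E d g t ε n := by
  induction s generalizing c with
  | zero => simpa using hc
  | succ s ih =>
    have hc' : (fun k => c k / 2) ∈ E d g t ε (n+s) := parent_mem hc
    have := ih hc'
    have heq : (fun k => (fun k => c k / 2) k / 2 ^ s) = (fun k => c k / 2^(s+1)) := by
      funext k
      simp only []
      rw [Nat.div_div_eq_div_mul]
      congr 1
      rw [pow_succ]
      ring
    rwa [heq] at this

lemma card_children (n : ℕ) :
    ((E d g t ε n).biUnion (ch d)).card = 2^d * (E d g t ε n).card := by
  rw [Finset.card_biUnion]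
  · have : ∀ c : Fin d → ℕ, (ch d c).card = 2^d := by
      intro c
      rw [ch, Fintype.card_piFinset]
      have : ∀ k : Fin d, ({2 * c k, 2 * c k + 1} : Finset ℕ).card = 2 := by
        intro k
        rw [Finset.card_insert_of_notMem (by simp), Finset.card_singleton]
      simp [this]
    rw [Finset.sum_congr rfl (fun c _ => this c), Finset.sum_const, smul_eq_mul, mul_comm]
  · intro x hx y hy hxy
    rw [Function.onFun, Finset.disjoint_left]
    intro c hcx hcy
    exact hxy ((parent_of_child hcx).symm.trans (parent_of_child hcy))

/-- The killed-cells bound for a single index. -/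
lemma kill_bound {n m : ℕ} {tj : ℝ} (hg : 1 ≤ g) (hn : n + 1 = m + g)
    (h1 : (2:ℝ)^m ≤ tj) (h2 : tj < 2^(m+1)) (hε : 0 < ε) (hε2 : ε * 2^(g+2) ≤ 2) :
    ((((E d g t ε n).biUnion (ch d))).filter
        (fun c => ∀ k, bad tj ε (n+1) (c k))).card ≤ 9^d * (E d g t ε m).card := by
  set S' := (E d g t ε n).biUnion (ch d) with hS'
  set F := S'.filter (fun c => ∀ k, bad tj ε (n+1) (c k)) with hF
  set f : (Fin d → ℕ) → (Fin d → ℕ) := fun c k => c k / 2^g with hf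
  have himg : F.image f ⊆ E d g t ε m := by
    intro A hA
    obtain ⟨c, hc, rfl⟩ := Finset.mem_image.mp hA
    have hcS' : c ∈ S' := (Finset.mem_filter.mp hc).1
    have hpar : (fun k => c k / 2) ∈ E d g t ε n := parent_mem_of_mem_biUnion hcS'
    obtain ⟨g', rfl⟩ : ∃ g', g = g' + 1 := ⟨g - 1, by omega⟩
    have hnm : n = m + g' := by omega
    rw [hnm] at hpar
    have := ancestor_mem g' hpar
    have heq : (fun k => (fun k => c k / 2) k / 2 ^ g') = f c := by
      funext k
      simp only [hf]
      rw [Nat.div_div_eq_div_mul]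
      congr 1
      rw [pow_succ]
      ring
    rwa [heq] at this
  have hfiber : ∀ A ∈ F.image f, (F.filter (fun c => f c = A)).card ≤ 9^d := by
    intro A _
    have hsub : F.filter (fun c => f c = A) ⊆
        Fintype.piFinset (fun k =>
          (Finset.Ico (A k * 2^g) ((A k + 1) * 2^g)).filter (fun i => bad tj ε (n+1) i)) := by
      intro c hc
      obtain ⟨hcF, hcfA⟩ := Finset.mem_filter.mp hc
      obtain ⟨hcS', hbad⟩ := Finset.mem_filter.mp hcF
      rw [Fintype.mem_piFinset]
      intro k
      rw [Finset.mem_filter, Finset.mem_Ico]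
      have hdiv : c k / 2^g = A k := congrFun hcfA k
      have hpow : 0 < 2^g := Nat.pow_pos (by norm_num)
      refine ⟨⟨?_, ?_⟩, hbad k⟩
      · rw [← hdiv]; exact Nat.div_mul_le_self _ _
      · have h3 : c k < (c k / 2^g + 1) * 2^g := by
          calc c k = 2^g * (c k / 2^g) + c k % 2^g := (Nat.div_add_mod _ _).symm
            _ < 2^g * (c k / 2^g) + 2^g := by
                have := Nat.mod_lt (c k) hpow
                omega
            _ = (c k / 2^g + 1) * 2^g := by ring
        rw [hdiv] at h3
        exact h3
    calc (F.filter (fun c => f c = A)).card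
        ≤ (Fintype.piFinset (fun k =>
          (Finset.Ico (A k * 2^g) ((A k + 1) * 2^g)).filter (fun i => bad tj ε (n+1) i))).card :=
          Finset.card_le_card hsub
      _ = ∏ k : Fin d, ((Finset.Ico (A k * 2^g) ((A k + 1) * 2^g)).filter
            (fun i => bad tj ε (n+1) i)).card := Fintype.card_piFinset _
      _ ≤ ∏ _k : Fin d, 9 := by
          apply Finset.prod_le_prod (fun _ _ => Nat.zero_le _)
          intro k _
          have := kill1d hn h1 h2 hε hε2 (A k)
          convert this using 2
      _ = 9^d := by rw [Finset.prod_const, Finset.card_univ, Fintype.card_fin]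
  calc F.card ≤ 9^d * (F.image f).card := Finset.card_le_mul_card_image F (9^d) hfiber
    _ ≤ 9^d * (E d g t ε m).card := by
        apply Nat.mul_le_mul_left
        exact Finset.card_le_card himg

end Estruct
section Jset
variable {M : ℝ} {t : ℕ → ℝ} {g : ℕ}

/-- indices processed at level `n` -/
noncomputable def J (M : ℝ) (g : ℕ) (t : ℕ → ℝ) (n : ℕ) : Finset ℕ :=
  (Finset.Icc 1 (⌈M⌉₊ * n)).filter (fun j => mj t j + g = n)

lemma one_le_base (hM : 8 ≤ M) : (1:ℝ) ≤ 1 + 1/M := by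
  have : (0:ℝ) < M := by linarith
  have : (0:ℝ) ≤ 1/M := by positivity
  linarith

lemma base_pow_ceil (hM : 8 ≤ M) : (2:ℝ) ≤ (1 + 1/M)^(⌈M⌉₊) := by
  have hM0 : (0:ℝ) < M := by linarith
  have h := one_add_mul_le_pow (a := 1/M) (by nlinarith [one_div_pos.mpr hM0]) ⌈M⌉₊
  have hceil : M ≤ (⌈M⌉₊ : ℝ) := Nat.le_ceil M
  have : (1:ℝ) ≤ (⌈M⌉₊:ℝ) * (1/M) := by
    rw [mul_one_div, le_div_iff₀ hM0]
    linarith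
  linarith

lemma J_complete (hM : 8 ≤ M) (hpos : ∀ j, 1 ≤ j → 0 < t j) (ht1 : 2 ≤ t 1)
    (hlac : ∀ j, 1 ≤ j → 1 + 1 / M ≤ t (j + 1) / t j)
    {j n : ℕ} (hj : 1 ≤ j) (hlvl : mj t j + g = n) : j ∈ J M g t n := by
  rw [J, Finset.mem_filter, Finset.mem_Icc]
  refine ⟨⟨hj, ?_⟩, hlvl⟩
  set m := mj t j with hm
  have hmn : m ≤ n := by omega
  have h2 : 2 ≤ t j := t_two hM hpos ht1 hlac j hj
  -- show j ≤ ⌈M⌉₊ * m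
  by_contra hcon
  push_neg at hcon
  have hjm : ⌈M⌉₊ * m + 1 ≤ j := by
    have : ⌈M⌉₊ * m ≤ ⌈M⌉₊ * n := Nat.mul_le_mul_left _ hmn
    omega
  have hgrow := t_growth hM hpos hlac 1 (j - 1) le_rfl
  rw [show 1 + (j-1) = j by omega] at hgrow
  have hbase := one_le_base hM
  have hmono : (1 + 1/M)^(⌈M⌉₊ * m) ≤ (1 + 1/M)^(j-1) := by
    apply pow_le_pow_right₀ hbase
    omega
  have hpow2 : (2:ℝ)^m ≤ (1 + 1/M)^(⌈M⌉₊ * m) := by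
    rw [pow_mul]
    apply pow_le_pow_left₀ (by norm_num)
    exact base_pow_ceil hM
  have hub := mj_ub (j := j) (t := t) h2
  have : (2:ℝ)^(m+1) ≤ t j := by
    calc (2:ℝ)^(m+1) = 2 * 2^m := by rw [pow_succ]; ring
      _ ≤ t 1 * (1 + 1/M)^(j-1) := by
          have := le_trans hpow2 hmono
          nlinarith [pow_pos (lt_of_lt_of_le one_pos hbase) (j-1),
            pow_pos (show (0:ℝ) < 2 by norm_num) m]
      _ ≤ t j := hgrow
  rw [← hm] at hub
  linarith

lemma J_card (hM : 8 ≤ M) (hpos : ∀ j, 1 ≤ j → 0 < t j) (ht1 : 2 ≤ t 1)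
    (hlac : ∀ j, 1 ≤ j → 1 + 1 / M ≤ t (j + 1) / t j) (n : ℕ) :
    ((J M g t n).card : ℝ) ≤ M + 1 := by
  rcases Finset.eq_empty_or_nonempty (J M g t n) with h | h
  · rw [h]
    simp
    linarith
  set j0 := (J M g t n).min' h with hj0
  have hj0mem := (J M g t n).min'_mem h
  have hsub : J M g t n ⊆ Finset.Icc j0 (j0 + (⌈M⌉₊ - 1)) := by
    intro j hjmem
    rw [Finset.mem_Icc]
    refine ⟨Finset.min'_le _ _ hjmem, ?_⟩
    -- both j0 and j are in the same dyadic window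
    have hj01 : 1 ≤ j0 := by
      have := (Finset.mem_filter.mp hj0mem).1
      exact (Finset.mem_Icc.mp this).1
    have hj1 : 1 ≤ j := by
      have := (Finset.mem_filter.mp hjmem).1
      exact (Finset.mem_Icc.mp this).1
    have hmj0 : mj t j0 + g = n := (Finset.mem_filter.mp hj0mem).2
    have hmjj : mj t j + g = n := (Finset.mem_filter.mp hjmem).2
    have hmeq : mj t j = mj t j0 := by omega
    set m := mj t j0 with hm
    have h2j0 : 2 ≤ t j0 := t_two hM hpos ht1 hlac j0 hj01
    have h2j : 2 ≤ t j := t_two hM hpos ht1 hlac j hj1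
    have hle : j0 ≤ j := Finset.min'_le _ _ hjmem
    have hgrow := t_growth hM hpos hlac j0 (j - j0) hj01
    rw [show j0 + (j - j0) = j by omega] at hgrow
    have hbern := one_add_mul_le_pow (a := 1/M)
      (by nlinarith [one_div_pos.mpr (show (0:ℝ) < M by linarith)]) (j - j0)
    have hlbj0 : (2:ℝ)^m ≤ t j0 := by rw [hm]; exact mj_lb h2j0
    have hubj : t j < (2:ℝ)^(m+1) := by
      have := mj_ub (t := t) (j := j) h2j
      rwa [hmeq] at this
    -- t j0 * (1+1/M)^(j-j0) ≤ t j < 2^(m+1) = 2*2^m ≤ 2 * t j0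
    have hm0 : (0:ℝ) < 2^m := by positivity
    have hpowlt : (1 + 1/M)^(j - j0) < 2 := by
      by_contra hcc
      push_neg at hcc
      have : 2 * t j0 ≤ t j0 * (1 + 1/M)^(j-j0) := by nlinarith
      have h2m1 : (2:ℝ)^(m+1) = 2*2^m := by rw [pow_succ]; ring
      nlinarith
    have hfrac : ((j:ℝ) - (j0:ℝ)) * (1/M) < 1 := by
      have : ((j - j0 : ℕ):ℝ) * (1/M) < 1 := by linarith
      rw [Nat.cast_sub hle] at this
      exact this
    have hMpos : (0:ℝ) < M := by linarith
    have hlt : ((j:ℝ) - (j0:ℝ)) < M := by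
      rw [mul_one_div] at hfrac
      rw [div_lt_one hMpos] at hfrac
      exact hfrac
    have hltM : (j:ℝ) < (j0:ℝ) + M := by linarith
    have : j < j0 + ⌈M⌉₊ := by
      have hceil : M ≤ (⌈M⌉₊:ℝ) := Nat.le_ceil M
      have : (j:ℝ) < (j0:ℝ) + (⌈M⌉₊:ℝ) := by linarith
      exact_mod_cast this
    have hceil1 : 1 ≤ ⌈M⌉₊ := Nat.one_le_ceil_iff.mpr hMpos
    omega
  calc ((J M g t n).card : ℝ) ≤ ((Finset.Icc j0 (j0 + (⌈M⌉₊ - 1))).card : ℝ) := by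
        exact_mod_cast Finset.card_le_card hsub
    _ = ((⌈M⌉₊ - 1 + 1 : ℕ) : ℝ) := by
        rw [Nat.card_Icc]
        congr 1
        omega
    _ ≤ M + 1 := by
        have h1 : 1 ≤ ⌈M⌉₊ := Nat.one_le_ceil_iff.mpr (by linarith)
        rw [show ⌈M⌉₊ - 1 + 1 = ⌈M⌉₊ by omega]
        have := Nat.ceil_lt_add_one (show (0:ℝ) ≤ M by linarith)
        linarith

end Jset
section Main
variable {d g : ℕ} {t : ℕ → ℝ} {ε M θ : ℝ}

set_option maxHeartbeats 1000000 in
/-- Main induction: survivor counts decay at most geometrically with ratio θ. -/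
lemma step (hd : 1 ≤ d) (hg : 1 ≤ g) (hM : 8 ≤ M)
    (hpos : ∀ j, 1 ≤ j → 0 < t j) (ht1 : 2 ≤ t 1)
    (hlac : ∀ j, 1 ≤ j → 1 + 1 / M ≤ t (j + 1) / t j)
    (hε : 0 < ε) (hε2 : ε * 2^(g+2) ≤ 2)
    (hθ0 : 0 < θ) (hθle : θ ≤ 2^d)
    (hgap : (M+1) * (9:ℝ)^d ≤ (2^d - θ) * θ^(g-1)) :
    ∀ n : ℕ, θ * ((E d g t ε n).card : ℝ) ≤ ((E d g t ε (n+1)).card : ℝ) := by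
  intro n
  induction n using Nat.strong_induction_on with
  | _ n IH =>
  -- chain lemma
  have chain : ∀ k mm, mm + k = n → θ^k * ((E d g t ε mm).card : ℝ) ≤ ((E d g t ε n).card : ℝ) := by
    intro k
    induction k with
    | zero =>
      intro mm hmm
      obtain rfl : mm = n := by omega
      rw [pow_zero, one_mul]
    | succ k ihk =>
      intro mm hmm
      have h1 : θ * ((E d g t ε mm).card : ℝ) ≤ ((E d g t ε (mm+1)).card : ℝ) :=
        IH mm (by omega)
      have h2 := ihk (mm+1) (by omega)
      calc θ^(k+1) * ((E d g t ε mm).card : ℝ) = θ^k * (θ * ((E d g t ε mm).card : ℝ)) := by ring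
        _ ≤ θ^k * ((E d g t ε (mm+1)).card : ℝ) := by
            apply mul_le_mul_of_nonneg_left h1 (by positivity)
        _ ≤ _ := h2
  -- unfold the recursion
  set S' := (E d g t ε n).biUnion (ch d) with hS'
  set P : (Fin d → ℕ) → Prop :=
    fun c => ∃ j, 1 ≤ j ∧ mj t j + g = n+1 ∧ ∀ k, bad (t j) ε (n+1) (c k) with hP
  have hE1 : E d g t ε (n+1) = S'.filter (fun c => ¬ P c) := by
    rw [E_succ]
  have hnat := Finset.card_filter_add_card_filter_not (s := S') (p := P)
  have hsum : ((S'.filter P).card : ℝ) + ((E d g t ε (n+1)).card : ℝ) = (S'.card : ℝ) := by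
    rw [hE1]
    exact_mod_cast hnat
  have hS'card : (S'.card : ℝ) = 2^d * ((E d g t ε n).card : ℝ) := by
    rw [hS', card_children]
    push_cast
    ring
  rcases Finset.eq_empty_or_nonempty (J M g t (n+1)) with hJ | ⟨jstar, hjmem⟩
  · -- no index processed at this level
    have hPempty : S'.filter P = ∅ := by
      rw [Finset.filter_eq_empty_iff]
      rintro c - ⟨j, hj1, hjlvl, -⟩
      have := J_complete hM hpos ht1 hlac hj1 hjlvl
      rw [hJ] at this
      exact absurd this (Finset.notMem_empty j)
    rw [hPempty] at hsum
    simp at hsum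
    rw [hsum, hS'card]
    apply mul_le_mul_of_nonneg_right hθle (Nat.cast_nonneg _)
  · -- some indices processed; they all live in the same dyadic window
    set m := mj t jstar with hm
    have hjs := Finset.mem_filter.mp hjmem
    have hmg : m + g = n + 1 := hjs.2
    have hmn : m + (g - 1) = n := by omega
    -- bound the number of killed cells
    have hcover : S'.filter P ⊆ (J M g t (n+1)).biUnion
        (fun j => S'.filter (fun c => ∀ k, bad (t j) ε (n+1) (c k))) := by
      intro c hc
      obtain ⟨hcS', j, hj1, hjlvl, hjbad⟩ := Finset.mem_filter.mp hc
      rw [Finset.mem_biUnion]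
      exact ⟨j, J_complete hM hpos ht1 hlac hj1 hjlvl,
        Finset.mem_filter.mpr ⟨hcS', hjbad⟩⟩
    have hterm : ∀ j ∈ J M g t (n+1),
        ((S'.filter (fun c => ∀ k, bad (t j) ε (n+1) (c k))).card : ℝ)
          ≤ 9^d * ((E d g t ε m).card : ℝ) := by
      intro j hj
      have hj' := Finset.mem_filter.mp hj
      have hj1 : 1 ≤ j := (Finset.mem_Icc.mp hj'.1).1
      have hmjeq : mj t j = m := by
        have := hj'.2
        omega
      have h2j : 2 ≤ t j := t_two hM hpos ht1 hlac j hj1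
      have hkb := kill_bound (d := d) (t := t) (ε := ε) (tj := t j) (m := m)
        hg (by omega : n + 1 = m + g)
        (by rw [← hmjeq]; exact mj_lb h2j)
        (by rw [← hmjeq]; exact mj_ub h2j) hε hε2
      exact_mod_cast hkb
    have hbad : ((S'.filter P).card : ℝ) ≤ (M+1) * (9^d * ((E d g t ε m).card : ℝ)) := by
      calc ((S'.filter P).card : ℝ)
          ≤ (((J M g t (n+1)).biUnion
            (fun j => S'.filter (fun c => ∀ k, bad (t j) ε (n+1) (c k)))).card : ℝ) := by
            exact_mod_cast Finset.card_le_card hcover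
        _ ≤ ((∑ j ∈ J M g t (n+1),
            (S'.filter (fun c => ∀ k, bad (t j) ε (n+1) (c k))).card : ℕ) : ℝ) := by
            exact_mod_cast Finset.card_biUnion_le
        _ = ∑ j ∈ J M g t (n+1),
            ((S'.filter (fun c => ∀ k, bad (t j) ε (n+1) (c k))).card : ℝ) := by
            push_cast
            rfl
        _ ≤ ∑ _j ∈ J M g t (n+1), 9^d * ((E d g t ε m).card : ℝ) :=
            Finset.sum_le_sum hterm
        _ = ((J M g t (n+1)).card : ℝ) * (9^d * ((E d g t ε m).card : ℝ)) := by
            rw [Finset.sum_const, nsmul_eq_mul]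
        _ ≤ (M+1) * (9^d * ((E d g t ε m).card : ℝ)) := by
            apply mul_le_mul_of_nonneg_right (J_card hM hpos ht1 hlac (n+1))
            exact mul_nonneg (pow_nonneg (by norm_num) d) (Nat.cast_nonneg _)
    -- chain the previous levels
    have hchain := chain (g-1) m hmn
    have hfinal : (M+1) * (9^d * ((E d g t ε m).card : ℝ))
        ≤ (2^d - θ) * ((E d g t ε n).card : ℝ) := by
      calc (M+1) * (9^d * ((E d g t ε m).card : ℝ))
          = ((M+1) * 9^d) * ((E d g t ε m).card : ℝ) := by ring
        _ ≤ ((2^d - θ) * θ^(g-1)) * ((E d g t ε m).card : ℝ) := by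
            apply mul_le_mul_of_nonneg_right hgap (Nat.cast_nonneg _)
        _ = (2^d - θ) * (θ^(g-1) * ((E d g t ε m).card : ℝ)) := by ring
        _ ≤ (2^d - θ) * ((E d g t ε n).card : ℝ) := by
            apply mul_le_mul_of_nonneg_left hchain
            linarith
    linarith

/-- positivity of survivor counts -/
lemma E_pos (hd : 1 ≤ d) (hg : 1 ≤ g) (hM : 8 ≤ M)
    (hpos : ∀ j, 1 ≤ j → 0 < t j) (ht1 : 2 ≤ t 1)
    (hlac : ∀ j, 1 ≤ j → 1 + 1 / M ≤ t (j + 1) / t j)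
    (hε : 0 < ε) (hε2 : ε * 2^(g+2) ≤ 2)
    (hθ0 : 0 < θ) (hθle : θ ≤ 2^d)
    (hgap : (M+1) * (9:ℝ)^d ≤ (2^d - θ) * θ^(g-1)) :
    ∀ n : ℕ, (E d g t ε n).Nonempty := by
  have hmain := step hd hg hM hpos ht1 hlac hε hε2 hθ0 hθle hgap
  have : ∀ n : ℕ, θ^n ≤ ((E d g t ε n).card : ℝ) := by
    intro n
    induction n with
    | zero =>
      rw [pow_zero]
      norm_num [E]
    | succ n ih =>
      calc θ^(n+1) = θ * θ^n := by ring
        _ ≤ θ * ((E d g t ε n).card : ℝ) := by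
            apply mul_le_mul_of_nonneg_left ih (le_of_lt hθ0)
        _ ≤ _ := hmain n
  intro n
  rw [← Finset.card_pos]
  have h1 := this n
  have h2 : (0:ℝ) < θ^n := pow_pos hθ0 n
  exact_mod_cast lt_of_lt_of_le h2 h1
end Main
section Limit
variable {d g : ℕ} {t : ℕ → ℝ} {ε : ℝ}

/-- union of surviving cubes at level n -/
def K (d g : ℕ) (t : ℕ → ℝ) (ε : ℝ) (n : ℕ) : Set (Fin d → ℝ) :=
  ⋃ c ∈ (E d g t ε n : Set (Fin d → ℕ)),
    Set.Icc (fun k => (c k : ℝ)/2^n) (fun k => ((c k : ℝ)+1)/2^n)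

lemma K_closed (n : ℕ) : IsClosed (K d g t ε n) :=
  Set.Finite.isClosed_biUnion (Finset.finite_toSet _) (fun _ _ => isClosed_Icc)

lemma K_compact (n : ℕ) : IsCompact (K d g t ε n) :=
  Set.Finite.isCompact_biUnion (Finset.finite_toSet _) (fun _ _ => isCompact_Icc)

lemma K_nonempty (hne : (E d g t ε n).Nonempty) : (K d g t ε n).Nonempty := by
  obtain ⟨c, hc⟩ := hne
  refine ⟨fun k => (c k : ℝ)/2^n, ?_⟩
  rw [K, Set.mem_iUnion₂]
  refine ⟨c, hc, ?_⟩
  rw [Set.mem_Icc]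
  constructor <;> (rw [Pi.le_def]; intro k)
  · exact le_refl _
  · have hp2 : (0:ℝ) < 2^n := by positivity
    apply div_le_div_of_nonneg_right ?_ ?_ <;> first | linarith | positivity

lemma K_anti (n : ℕ) : K d g t ε (n+1) ⊆ K d g t ε n := by
  intro x hx
  rw [K, Set.mem_iUnion₂] at hx ⊢
  obtain ⟨c, hc, hxc⟩ := hx
  refine ⟨fun k => c k / 2, by exact_mod_cast parent_mem hc, ?_⟩
  rw [Set.mem_Icc] at hxc ⊢
  obtain ⟨hlo, hhi⟩ := hxc
  have hp2 : (0:ℝ) < 2^n := by positivity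
  have hp21 : (0:ℝ) < 2^(n+1) := by positivity
  constructor <;> rw [Pi.le_def] <;> intro k
  · have := hlo k
    have hnat : (c k / 2) * 2 ≤ c k := Nat.div_mul_le_self _ _
    have hcast : ((c k / 2 : ℕ):ℝ) * 2 ≤ (c k : ℝ) := by exact_mod_cast hnat
    have : ((c k / 2 : ℕ):ℝ)/2^n ≤ (c k : ℝ)/2^(n+1) := by
      rw [div_le_div_iff₀ hp2 hp21, pow_succ]
      nlinarith
    exact le_trans this (hlo k)
  · have hnat : c k ≤ (c k / 2) * 2 + 1 := by
      have := Nat.div_add_mod (c k) 2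
      have := Nat.mod_lt (c k) (show 0 < 2 by norm_num)
      omega
    have hcast : (c k : ℝ) ≤ ((c k / 2 : ℕ):ℝ) * 2 + 1 := by exact_mod_cast hnat
    have : ((c k : ℝ)+1)/2^(n+1) ≤ (((c k / 2 : ℕ):ℝ)+1)/2^n := by
      rw [div_le_div_iff₀ hp21 hp2, pow_succ]
      nlinarith
    exact le_trans (hhi k) this

end Limit
end PS

set_option maxHeartbeats 1000000 in
/-- Theorem 1 (multidimensional Peres–Schlag): there are reals `α 1, …, α d`
with `max_k ‖α k * t j‖ ≥ 1 / (2^11 (M log M)^(1/d))` for all `j ≥ 1`. -/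
theorem peres_schlag_multidim (d : ℕ) (hd : 1 ≤ d) (M : ℝ) (hM : 8 ≤ M)
    (t : ℕ → ℝ) (hpos : ∀ j, 1 ≤ j → 0 < t j) (ht1 : 2 ≤ t 1)
    (hlac : ∀ j, 1 ≤ j → 1 + 1 / M ≤ t (j + 1) / t j) :
    ∃ α : Fin d → ℝ, ∀ j, 1 ≤ j → ∃ k : Fin d, ∀ a : ℤ,
      1 / (2 ^ 11 * (M * Real.log M) ^ ((1 : ℝ) / d)) ≤ |α k * t j - (a : ℝ)| := by
  classical
  set L : ℝ := Real.log M with hLdef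
  -- basic facts about L
  have hlog2 : (0.6931471803 : ℝ) < Real.log 2 := Real.log_two_gt_d9
  have hL2 : 2 ≤ L := by
    rw [hLdef]
    have h8 : Real.log 8 ≤ Real.log M := Real.log_le_log (by norm_num) hM
    have : Real.log 8 = 3 * Real.log 2 := by
      rw [show (8:ℝ) = 2^3 by norm_num, Real.log_pow]
      push_cast; ring
    linarith
  have hMpos : (0:ℝ) < M := by linarith
  have hMLpos : (0:ℝ) < M * L := by nlinarith
  have hML1 : (1:ℝ) ≤ M * L := by nlinarith
  set X : ℝ := (M * L) ^ ((1:ℝ)/d) with hXdef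
  have hd0 : (d:ℝ) ≠ 0 := by
    have : 0 < d := hd
    positivity
  have hdinv_pos : (0:ℝ) < 1/d := by positivity
  have hX1 : (1:ℝ) ≤ X := by
    rw [hXdef]
    calc (1:ℝ) = (1:ℝ) ^ ((1:ℝ)/d) := (Real.one_rpow _).symm
      _ ≤ (M*L) ^ ((1:ℝ)/d) := Real.rpow_le_rpow (by norm_num) hML1 (le_of_lt hdinv_pos)
  have hXpos : (0:ℝ) < X := by linarith
  have hXd : X ^ d = M * L := by
    rw [hXdef, ← Real.rpow_natCast ((M*L) ^ ((1:ℝ)/d)) d, ← Real.rpow_mul (le_of_lt hMLpos)]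
    rw [one_div, inv_mul_cancel₀ hd0, Real.rpow_one]
  set ε : ℝ := 1 / (2^11 * X) with hεdef
  have hε : 0 < ε := by rw [hεdef]; positivity
  set y : ℝ := Real.logb 2 X with hydef
  have hy0 : 0 ≤ y := Real.logb_nonneg (by norm_num) hX1
  set g : ℕ := ⌊y⌋₊ + 10 with hgdef
  have hg1 : 1 ≤ g := by omega
  have h2y : (2:ℝ) ^ y = X := Real.rpow_logb (by norm_num) (by norm_num) hXpos
  have hfloor_le : (2:ℝ) ^ (⌊y⌋₊:ℕ) ≤ X := by
    rw [← h2y, ← Real.rpow_natCast 2 ⌊y⌋₊]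
    exact Real.rpow_le_rpow_of_exponent_le (by norm_num) (Nat.floor_le hy0)
  have hfloor_ge : X ≤ 2 * (2:ℝ) ^ (⌊y⌋₊:ℕ) := by
    rw [← h2y]
    have : y < (⌊y⌋₊:ℝ) + 1 := Nat.lt_floor_add_one y
    calc (2:ℝ)^y ≤ (2:ℝ)^(((⌊y⌋₊:ℕ):ℝ) + 1) :=
          Real.rpow_le_rpow_of_exponent_le (by norm_num) (le_of_lt this)
      _ = 2 * (2:ℝ)^(⌊y⌋₊:ℕ) := by
          rw [Real.rpow_add (by norm_num), Real.rpow_one, Real.rpow_natCast]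
          ring
  have hglb : (2:ℝ)^9 * X ≤ 2^g := by
    rw [hgdef, pow_add]
    calc (2:ℝ)^9 * X ≤ 2^9 * (2 * 2^(⌊y⌋₊:ℕ)) := by nlinarith [hfloor_ge]
      _ = 2^(⌊y⌋₊:ℕ) * 2^10 := by ring
  have hgub : (2:ℝ)^g ≤ 2^10 * X := by
    rw [hgdef, pow_add]
    calc (2:ℝ)^(⌊y⌋₊:ℕ) * 2^10 ≤ X * 2^10 := by nlinarith [hfloor_le]
      _ = 2^10 * X := by ring
  have hε2 : ε * 2^(g+2) ≤ 2 := by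
    rw [hεdef]
    rw [div_mul_eq_mul_div, div_le_iff₀ (by positivity)]
    calc (1:ℝ) * 2^(g+2) = 4 * 2^g := by rw [pow_add]; ring
      _ ≤ 4 * (2^10 * X) := by nlinarith [hgub]
      _ ≤ 2 * (2^11 * X) := by ring_nf; linarith [hXpos]
  -- bound on g
  have hgle : (g:ℝ) ≤ 8 * L := by
    have hylog : y ≤ 3 * L := by
      rw [hydef, Real.logb, hXdef, Real.log_rpow hMLpos]
      have hlogML : Real.log (M*L) ≤ 2 * L := by
        rw [Real.log_mul (ne_of_gt hMpos) (by linarith)]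
        have h1 : Real.log L ≤ L := by
          have := Real.log_le_sub_one_of_pos (show (0:ℝ) < L by linarith)
          linarith
        rw [← hLdef]
        linarith
      have hlog2pos : (0:ℝ) < Real.log 2 := by linarith
      rw [div_le_iff₀ hlog2pos]
      have h1d : (1:ℝ)/d * Real.log (M*L) ≤ Real.log (M*L) := by
        have hlogML0 : 0 ≤ Real.log (M*L) := Real.log_nonneg hML1
        have : (1:ℝ)/d ≤ 1 := by
          rw [div_le_one (by positivity)]
          exact_mod_cast hd
        nlinarith
      have : 2 * L ≤ 3 * L * Real.log 2 := by nlinarith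
      linarith
    have : (g:ℝ) = (⌊y⌋₊:ℝ) + 10 := by rw [hgdef]; push_cast; ring
    rw [this]
    have := Nat.floor_le hy0
    have : (⌊y⌋₊:ℝ) ≤ 3 * L := by linarith
    linarith
  -- the key counting inequality
  have hKC : (M+1) * (9:ℝ)^d * (4*(g:ℝ)) ≤ ((2:ℝ)^g)^d := by
    have h512 : ((2:ℝ)^g)^d ≥ (2^9)^d * (M * L) := by
      calc ((2:ℝ)^g)^d ≥ ((2:ℝ)^9 * X)^d := by
            apply pow_le_pow_left₀ (by positivity) hglb
        _ = (2^9)^d * X^d := mul_pow _ _ _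
        _ = (2^9)^d * (M * L) := by rw [hXd]
    have hM1 : M + 1 ≤ (9/8) * M := by linarith
    have h36 : (36:ℝ) * 9^d ≤ (2^9)^d := by
      have : ((2:ℝ)^9)^d = 9^d * (512/9)^d := by
        rw [← mul_pow]
        norm_num
      rw [this]
      have h1 : (512/9 : ℝ) ≤ (512/9)^d := le_self_pow₀ (by norm_num) (by omega)
      have h9 : (0:ℝ) < (9:ℝ)^d := by positivity
      nlinarith
    calc (M+1) * (9:ℝ)^d * (4*(g:ℝ)) = (9:ℝ)^d * ((M+1) * (4*(g:ℝ))) := by ring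
      _ ≤ (9:ℝ)^d * (((9/8)*M) * (4*(8*L))) := by
          apply mul_le_mul_of_nonneg_left ?_ (by positivity)
          apply mul_le_mul hM1 (by linarith [hgle]) (by positivity) (by linarith)
      _ = 36 * 9^d * (M * L) := by ring
      _ ≤ (2^9)^d * (M*L) := mul_le_mul_of_nonneg_right h36 hMLpos.le
      _ ≤ ((2:ℝ)^g)^d := h512
  -- θ and the gap inequality
  set θ : ℝ := 2^d * (1 - 1/(2*(g:ℝ))) with hθdef
  have hg0R : (0:ℝ) < (g:ℝ) := by exact_mod_cast hg1
  have hβ : (0:ℝ) < 1/(2*(g:ℝ)) := by positivity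
  have hg1R : (1:ℝ) ≤ (g:ℝ) := by exact_mod_cast hg1
  have hβhalf : 1/(2*(g:ℝ)) ≤ 1/2 := by
    rw [div_le_div_iff₀ (by positivity) (by norm_num)]
    linarith
  have hθ0 : 0 < θ := by
    rw [hθdef]
    have : (0:ℝ) < (2:ℝ)^d := by positivity
    nlinarith
  have hθle : θ ≤ 2^d := by
    rw [hθdef]
    have : (0:ℝ) < (2:ℝ)^d := by positivity
    nlinarith
  have hgap : (M+1) * (9:ℝ)^d ≤ (2^d - θ) * θ^(g-1) := by
    have hsub : (2:ℝ)^d - θ = 2^d * (1/(2*(g:ℝ))) := by rw [hθdef]; ring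
    have hbern : (1:ℝ) - ((g:ℝ)-1)/(2*(g:ℝ)) ≤ (1 - 1/(2*(g:ℝ)))^(g-1) := by
      have h := one_add_mul_le_pow (a := -(1/(2*(g:ℝ)))) (by linarith) (g-1)
      have hcast : ((g-1 : ℕ):ℝ) = (g:ℝ) - 1 := by
        push_cast [hg1]
        try ring
      rw [hcast] at h
      have heq : (1:ℝ) + -(1/(2*(g:ℝ))) = 1 - 1/(2*(g:ℝ)) := by ring
      rw [← heq]
      calc (1:ℝ) - ((g:ℝ)-1)/(2*(g:ℝ)) = 1 + ((g:ℝ)-1) * (-(1/(2*(g:ℝ)))) := by ring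
        _ ≤ _ := h
    have hhalf : (1:ℝ)/2 ≤ (1 - 1/(2*(g:ℝ)))^(g-1) := by
      refine le_trans ?_ hbern
      rw [div_le_iff₀ (by positivity : (0:ℝ) < 2*(g:ℝ))] at *
      have : ((g:ℝ)-1)/(2*(g:ℝ)) ≤ 1/2 := by
        rw [div_le_div_iff₀ (by positivity) (by norm_num)]
        linarith
      linarith
    have hθpow : θ^(g-1) = (2^d)^(g-1) * (1 - 1/(2*(g:ℝ)))^(g-1) := by
      rw [hθdef, mul_pow]
    have hpowg : ((2:ℝ)^d)^(g-1) * (2:ℝ)^d = ((2:ℝ)^d)^g := by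
      rw [← pow_succ, Nat.sub_add_cancel hg1]
    have hfac : ((2:ℝ)^d)^(g-1) * (1/2) * (2^d * (1/(2*(g:ℝ)))) = ((2:ℝ)^d)^g / (4*(g:ℝ)) := by
      rw [← hpowg]
      field_simp
      try ring
    have h2dg : ((2:ℝ)^d)^g = ((2:ℝ)^g)^d := by
      rw [← pow_mul, ← pow_mul, mul_comm]
    calc (M+1) * (9:ℝ)^d = ((M+1) * (9:ℝ)^d * (4*(g:ℝ))) / (4*(g:ℝ)) := by
          field_simp
      _ ≤ ((2:ℝ)^g)^d / (4*(g:ℝ)) := by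
          apply div_le_div_of_nonneg_right hKC ?_ |>.trans_eq rfl
          positivity
      _ = ((2:ℝ)^d)^g / (4*(g:ℝ)) := by rw [h2dg]
      _ = ((2:ℝ)^d)^(g-1) * (1/2) * (2^d * (1/(2*(g:ℝ)))) := hfac.symm
      _ ≤ ((2:ℝ)^d)^(g-1) * (1 - 1/(2*(g:ℝ)))^(g-1) * (2^d * (1/(2*(g:ℝ)))) := by
          apply mul_le_mul_of_nonneg_right ?_ (by positivity)
          apply mul_le_mul_of_nonneg_left hhalf (by positivity)
      _ = (2^d - θ) * θ^(g-1) := by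
          rw [hsub, hθpow]
          ring
  -- survivor sets are nonempty, nested, compact
  have hEne := PS.E_pos (d := d) (g := g) (t := t) (ε := ε) (M := M) (θ := θ)
    hd hg1 hM hpos ht1 hlac hε hε2 hθ0 hθle hgap
  have hKne : ∀ n, (PS.K d g t ε n).Nonempty := fun n => PS.K_nonempty (hEne n)
  have hinter := IsCompact.nonempty_iInter_of_sequence_nonempty_isCompact_isClosed
    (PS.K d g t ε) (fun n => PS.K_anti n) hKne (PS.K_compact 0) (fun n => PS.K_closed n)
  obtain ⟨α, hα⟩ := hinter
  rw [Set.mem_iInter] at hα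
  refine ⟨α, fun j hj => ?_⟩
  -- extract the good coordinate at the level where j was processed
  have h2j : 2 ≤ t j := PS.t_two hM hpos ht1 hlac j hj
  obtain ⟨n', hn'⟩ : ∃ n', PS.mj t j + g = n' + 1 := ⟨PS.mj t j + g - 1, by omega⟩
  have hαn := hα (n' + 1)
  rw [PS.K, Set.mem_iUnion₂] at hαn
  obtain ⟨c, hc, hαc⟩ := hαn
  rw [Finset.mem_coe, PS.E_succ, Finset.mem_filter] at hc
  have hnot := hc.2
  push_neg at hnot
  obtain ⟨k, hk⟩ := hnot j hj hn'
  refine ⟨k, fun a => ?_⟩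
  rw [PS.bad] at hk
  push_neg at hk
  rw [Set.mem_Icc] at hαc
  have h1 := hαc.1 k
  have h2 := hαc.2 k
  exact hk (α k) h1 h2 a
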